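/- Let (X,d) be a compact metric space, and let ζ_n (n ∈ ℕ) and ζ be quasi-states on X. Then W₁(ζ_n, ζ) → 0 as n → ∞ if and only if ζ_n(f) → ζ(f) for every f ∈ C(X,ℝ). In other words, the metric W₁ on the set of quasi-states induces the weak topology. -/

import Mathlib

open MeasureTheory Topology Metric Filter
open scoped Manifold NNReal ENNReal

/-- A quasi-state on a topological space `X`: a functional on `C(X,ℝ)` which is
normalized, monotone, and linear on each singly-generated subalgebra
`C(f) = {φ ∘ f | φ : ℝ → ℝ continuous}`. -/
structure QuasiState (X : Type*) [TopologicalSpace X] where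
  toFun : C(X, ℝ) → ℝ
  normalized : toFun 1 = 1
  mono : ∀ f g : C(X, ℝ), (∀ x, f x ≤ g x) → toFun f ≤ toFun g
  add_comp : ∀ (φ ψ : C(ℝ, ℝ)) (f : C(X, ℝ)),
    toFun (φ.comp f + ψ.comp f) = toFun (φ.comp f) + toFun (ψ.comp f)
  smul_comp : ∀ (c : ℝ) (φ : C(ℝ, ℝ)) (f : C(X, ℝ)),
    toFun (c • φ.comp f) = c * toFun (φ.comp f)

/-- A topological measure on `X`: a `[0,1]`-valued set function defined on the
collection of open or closed subsets, normalized, monotone, finitely additive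
on disjoint unions that stay in the collection, and inner regular on opens. -/
structure TopMeasure (X : Type*) [TopologicalSpace X] where
  toFun : Set X → ℝ
  nonneg : ∀ A : Set X, (IsOpen A ∨ IsClosed A) → 0 ≤ toFun A
  le_one : ∀ A : Set X, (IsOpen A ∨ IsClosed A) → toFun A ≤ 1
  apply_univ : toFun Set.univ = 1
  mono : ∀ A A' : Set X, (IsOpen A ∨ IsClosed A) → (IsOpen A' ∨ IsClosed A') →
    A ⊆ A' → toFun A ≤ toFun A'
  additive : ∀ (m : ℕ) (A : Set X) (B : Fin m → Set X),
    (IsOpen A ∨ IsClosed A) → (∀ i, IsOpen (B i) ∨ IsClosed (B i)) →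
    (Pairwise fun i j => Disjoint (B i) (B j)) → A = ⋃ i, B i →
    toFun A = ∑ i, toFun (B i)
  regular : ∀ O : Set X, IsOpen O →
    toFun O = sSup {t : ℝ | ∃ K : Set X, IsClosed K ∧ K ⊆ O ∧ t = toFun K}

/-- A quasi-state and a topological measure correspond to one another under the
Aarnes representation theorem. -/
def Corresponds {X : Type*} [TopologicalSpace X] (ζ : QuasiState X) (τ : TopMeasure X) : Prop :=
  ∀ f : C(X, ℝ), ζ.toFun f = sInf (Set.range f) +
    ∫ s in Set.Icc (sInf (Set.range f)) (sSup (Set.range f)), τ.toFun {x | s ≤ f x}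

/-- A set is solid if it and its complement are both connected. -/
def IsSolid {X : Type*} [TopologicalSpace X] (A : Set X) : Prop :=
  IsPreconnected A ∧ IsPreconnected Aᶜ

/-- The (split) spectrum of a Borel probability measure. -/
def measureSpec {X : Type*} [TopologicalSpace X] [MeasurableSpace X]
    (μ : Measure X) : Set ℝ :=
  {α | α ∈ Set.Ioo (0 : ℝ) 1 ∧ ∃ C C' : Set X, IsClosed C ∧ IsSolid C ∧
    IsClosed C' ∧ IsSolid C' ∧ Disjoint C C' ∧
    μ C = ENNReal.ofReal α ∧ μ C' = ENNReal.ofReal (1 - α)}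

/-- `μ ∈ P₀(X)`: a Borel probability measure whose spectrum avoids `1/2`. -/
def MemP0 {X : Type*} [TopologicalSpace X] [MeasurableSpace X] (μ : Measure X) : Prop :=
  IsProbabilityMeasure μ ∧ (1/2 : ℝ) ∉ measureSpec μ

/-- The Aarnes condition for the topological measure `τ` with respect to `μ`:
on closed solid sets, `τ` is `0` below measure `1/2` and `1` from `1/2` on. -/
def AarnesCondition {X : Type*} [TopologicalSpace X] [MeasurableSpace X]
    (τ : TopMeasure X) (μ : Measure X) : Prop :=
  ∀ C : Set X, IsClosed C → IsSolid C →
    (μ C < 1/2 → τ.toFun C = 0) ∧ (1/2 ≤ μ C → τ.toFun C = 1)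

/-- The support of a measure on a topological space. -/
def measureSupport {Y : Type*} [TopologicalSpace Y] [MeasurableSpace Y] (ρ : Measure Y) : Set Y :=
  {y | ∀ U : Set Y, IsOpen U → y ∈ U → ρ U ≠ 0}

/-- The `∞`-Wasserstein distance between two Borel probability measures. -/
noncomputable def Winf {X : Type*} [MetricSpace X] [MeasurableSpace X]
    (μ ν : Measure X) : ℝ :=
  sInf {r : ℝ | ∃ ρ : Measure (X × X), IsProbabilityMeasure ρ ∧
    ρ.map Prod.fst = μ ∧ ρ.map Prod.snd = ν ∧
    ∀ p ∈ measureSupport ρ, dist p.1 p.2 ≤ r}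

/-- The `1`-Wasserstein (Kantorovich–Rubinstein dual) distance between quasi-states. -/
noncomputable def W1qs {X : Type*} [MetricSpace X] (ζ ζ' : QuasiState X) : ℝ :=
  sSup {r : ℝ | ∃ f : C(X, ℝ), LipschitzWith 1 f ∧ r = |ζ.toFun f - ζ'.toFun f|}

/-- The `1`-Wasserstein distance between measures (Kantorovich–Rubinstein dual form). -/
noncomputable def W1meas {X : Type*} [MetricSpace X] [MeasurableSpace X]
    (μ ν : Measure X) : ℝ :=
  sSup {r : ℝ | ∃ f : X → ℝ, LipschitzWith 1 f ∧ r = |∫ x, f x ∂μ - ∫ x, f x ∂ν|}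


section QSAux
variable {X : Type*} [TopologicalSpace X]

lemma qs_const (ζ : QuasiState X) (c : ℝ) : ζ.toFun (ContinuousMap.const X c) = c := by
  have h1 : (ContinuousMap.const ℝ (1:ℝ)).comp (1 : C(X,ℝ)) = 1 := by ext x; simp
  have h2 : ContinuousMap.const X c = c • ((ContinuousMap.const ℝ (1:ℝ)).comp (1 : C(X,ℝ))) := by
    ext x; simp
  rw [h2, ζ.smul_comp, h1, ζ.normalized, mul_one]

lemma qs_smul (ζ : QuasiState X) (c : ℝ) (f : C(X,ℝ)) : ζ.toFun (c • f) = c * ζ.toFun f := by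
  have := ζ.smul_comp c (ContinuousMap.id ℝ) f
  rwa [ContinuousMap.id_comp] at this

lemma qs_add_const (ζ : QuasiState X) (f : C(X,ℝ)) (c : ℝ) :
    ζ.toFun (f + ContinuousMap.const X c) = ζ.toFun f + c := by
  have := ζ.add_comp (ContinuousMap.id ℝ) (ContinuousMap.const ℝ c) f
  rw [ContinuousMap.id_comp, ContinuousMap.const_comp, qs_const] at this
  exact this

lemma qs_dist (ζ : QuasiState X) [CompactSpace X] (f g : C(X,ℝ)) :
    |ζ.toFun f - ζ.toFun g| ≤ dist f g := by
  have key : ∀ u v : C(X,ℝ), ζ.toFun u - ζ.toFun v ≤ dist u v := by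
    intro u v
    have h1 : ζ.toFun u ≤ ζ.toFun (v + ContinuousMap.const X (dist u v)) := by
      apply ζ.mono
      intro x
      have h := ContinuousMap.dist_apply_le_dist (f := u) (g := v) x
      have h' := abs_sub_le_iff.1 (by rwa [Real.dist_eq] at h)
      simp only [ContinuousMap.add_apply, ContinuousMap.const_apply]
      linarith [h'.1]
    rw [qs_add_const] at h1
    linarith
  rw [abs_sub_le_iff]
  exact ⟨key f g, by rw [dist_comm]; exact key g f⟩


lemma lipschitz_approx {X : Type*} [MetricSpace X] [CompactSpace X] [Nonempty X]
    (f : C(X,ℝ)) {ε : ℝ} (hε : 0 < ε) :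
    ∃ (K : ℝ≥0) (g : C(X,ℝ)), LipschitzWith K g ∧ dist f g ≤ ε := by
  have huc : UniformContinuous ⇑f := CompactSpace.uniformContinuous_of_continuous f.continuous
  rw [Metric.uniformContinuous_iff] at huc
  obtain ⟨δ, hδ, hδ'⟩ := huc ε hε
  set M : ℝ := ‖f‖ with hM
  have hM0 : 0 ≤ M := norm_nonneg f
  have hfM : ∀ x, |f x| ≤ M := fun x => f.norm_coe_le_norm x
  set Kr : ℝ := (2*M+1)/δ with hKr
  have hKr0 : 0 ≤ Kr := by positivity
  set g0 : X → ℝ := fun x => ⨅ y, (f y + Kr * dist x y) with hg0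
  have hbdd : ∀ x, BddBelow (Set.range fun y => f y + Kr * dist x y) := by
    intro x
    refine ⟨-M, ?_⟩
    rintro r ⟨y, rfl⟩
    show -M ≤ f y + Kr * dist x y
    have h1 := (abs_le.1 (hfM y)).1
    have h2 : 0 ≤ Kr * dist x y := mul_nonneg hKr0 dist_nonneg
    linarith
  have hle : ∀ x, g0 x ≤ f x := by
    intro x
    have := ciInf_le (hbdd x) x
    simpa using this
  have hge : ∀ x, f x - ε ≤ g0 x := by
    intro x
    apply le_ciInf
    intro y
    rcases lt_or_ge (dist x y) δ with h | h
    · have := hδ' (show dist x y < δ from h)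
      rw [Real.dist_eq] at this
      have := (abs_sub_lt_iff.1 this).1
      have h2 : 0 ≤ Kr * dist x y := mul_nonneg hKr0 dist_nonneg
      linarith
    · have h2 : Kr * δ ≤ Kr * dist x y := mul_le_mul_of_nonneg_left h hKr0
      have h3 : Kr * δ = 2*M+1 := by rw [hKr, div_mul_cancel₀ _ hδ.ne']
      have h4 := (abs_le.1 (hfM y)).1
      have h5 := (abs_le.1 (hfM x)).2
      linarith
  have hlip0 : ∀ x x', g0 x ≤ g0 x' + Kr * dist x x' := by
    intro x x'
    have : g0 x - Kr * dist x x' ≤ g0 x' := by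
      apply le_ciInf
      intro y
      have h1 : g0 x ≤ f y + Kr * dist x y := ciInf_le (hbdd x) y
      have h2 : dist x y ≤ dist x x' + dist x' y := dist_triangle x x' y
      nlinarith [mul_le_mul_of_nonneg_left h2 hKr0]
    linarith
  have hlip : LipschitzWith (Real.toNNReal Kr) g0 := by
    apply LipschitzWith.of_dist_le_mul
    intro x x'
    rw [Real.dist_eq, Real.coe_toNNReal _ hKr0, abs_sub_le_iff]
    constructor
    · have := hlip0 x x'; linarith
    · have := hlip0 x' x; rw [dist_comm] at this; linarith
  refine ⟨Real.toNNReal Kr, ⟨g0, hlip.continuous⟩, hlip, ?_⟩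
  rw [ContinuousMap.dist_le hε.le]
  intro x
  rw [Real.dist_eq, abs_sub_le_iff]
  constructor
  · have := hge x; simp only [ContinuousMap.coe_mk]; linarith
  · have := hle x; simp only [ContinuousMap.coe_mk]; linarith

end QSAux

/-- on a compact metric space, `W₁` induces the weak topology on
quasi-states: `W₁(ζ_n, ζ) → 0` iff `ζ_n(f) → ζ(f)` for every `f ∈ C(X,ℝ)`. -/
theorem W1qs_tendsto_zero_iff_weak {X : Type*} [MetricSpace X] [CompactSpace X]
    (ζ : ℕ → QuasiState X) (ζ₀ : QuasiState X) :
    Tendsto (fun k => W1qs (ζ k) ζ₀) atTop (nhds 0) ↔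
      ∀ f : C(X, ℝ), Tendsto (fun k => (ζ k).toFun f) atTop (nhds (ζ₀.toFun f)) := by
  classical
  rcases isEmpty_or_nonempty X with hX | hX
  · -- trivial empty case
    have hall : ∀ (ζ' : QuasiState X) (f : C(X,ℝ)), ζ'.toFun f = 1 := by
      intro ζ' f
      have hf1 : f = 1 := by ext x; exact (IsEmpty.false x).elim
      rw [hf1, ζ'.normalized]
    have hw : ∀ k, W1qs (ζ k) ζ₀ = 0 := by
      intro k
      have hset : {r : ℝ | ∃ f : C(X,ℝ), LipschitzWith 1 ⇑f ∧ r = |(ζ k).toFun f - ζ₀.toFun f|}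
          = {0} := by
        ext r
        simp only [Set.mem_setOf_eq, Set.mem_singleton_iff]
        constructor
        · rintro ⟨f, -, rfl⟩; rw [hall, hall]; simp
        · rintro rfl
          exact ⟨1, fun x => isEmptyElim x, by rw [hall, hall]; simp⟩
      show sSup _ = 0
      rw [hset, csSup_singleton]
    constructor
    · intro _ f
      have : (fun k => (ζ k).toFun f) = fun _ => ζ₀.toFun f := by
        funext k; rw [hall, hall]
      rw [this]; exact tendsto_const_nhds
    · intro _
      have : (fun k => W1qs (ζ k) ζ₀) = fun _ => (0:ℝ) := funext hw
      rw [this]; exact tendsto_const_nhds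
  · haveI := hX
    obtain ⟨x₀⟩ := hX
    set D := Metric.diam (Set.univ : Set X) with hDdef
    have hD0 : 0 ≤ D := Metric.diam_nonneg
    set S : QuasiState X → QuasiState X → Set ℝ :=
      fun a b => {r : ℝ | ∃ f : C(X,ℝ), LipschitzWith 1 ⇑f ∧ r = |a.toFun f - b.toFun f|}
      with hSdef
    have hWS : ∀ a b : QuasiState X, W1qs a b = sSup (S a b) := fun a b => rfl
    set Kset : Set C(X,ℝ) := {g | LipschitzWith 1 ⇑g ∧ g x₀ = 0} with hKsetdef
    have hKbd : ∀ g ∈ Kset, ∀ x, |g x| ≤ D := by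
      rintro g ⟨hg, hg0⟩ x
      have h1 : dist (g x) (g x₀) ≤ dist x x₀ := by simpa using hg.dist_le_mul x x₀
      have h2 : dist x x₀ ≤ D := Metric.dist_le_diam_of_mem isCompact_univ.isBounded trivial trivial
      rw [hg0, dist_zero_right, Real.norm_eq_abs] at h1
      linarith
    have habs : ∀ (ζ' : QuasiState X) (g : C(X,ℝ)), (∀ x, |g x| ≤ D) → |ζ'.toFun g| ≤ D := by
      intro ζ' g hgb
      rw [abs_le]
      constructor
      · have h : ζ'.toFun (ContinuousMap.const X (-D)) ≤ ζ'.toFun g :=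
          ζ'.mono _ _ (fun x => by
            have := (abs_le.1 (hgb x)).1
            simpa using this)
        rw [qs_const] at h; linarith
      · have h : ζ'.toFun g ≤ ζ'.toFun (ContinuousMap.const X D) :=
          ζ'.mono _ _ (fun x => by
            have := (abs_le.1 (hgb x)).2
            simpa using this)
        rw [qs_const] at h; linarith
    have hcenter : ∀ (f : C(X,ℝ)), LipschitzWith 1 ⇑f → ∃ g ∈ Kset,
        ∀ ζ' ζ'' : QuasiState X, ζ'.toFun f - ζ''.toFun f = ζ'.toFun g - ζ''.toFun g := by
      intro f hf
      refine ⟨f + ContinuousMap.const X (-(f x₀)), ⟨?_, by simp⟩, ?_⟩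
      · apply LipschitzWith.of_dist_le_mul
        intro x y
        have h := hf.dist_le_mul x y
        simpa [ContinuousMap.add_apply, ContinuousMap.const_apply] using h
      · intro ζ' ζ''
        rw [qs_add_const, qs_add_const]; ring
    have hSmem : ∀ (a b : QuasiState X) (f : C(X,ℝ)), LipschitzWith 1 ⇑f →
        |a.toFun f - b.toFun f| ∈ S a b := fun a b f hf => ⟨f, hf, rfl⟩
    have hSbdd : ∀ a b : QuasiState X, ∀ r ∈ S a b, r ≤ 2*D := by
      rintro a b r ⟨f, hf, rfl⟩
      obtain ⟨g, hgK, hgeq⟩ := hcenter f hf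
      rw [hgeq a b]
      have h1 := habs a g (hKbd g hgK)
      have h2 := habs b g (hKbd g hgK)
      calc |a.toFun g - b.toFun g| ≤ |a.toFun g| + |b.toFun g| := abs_sub _ _
        _ ≤ 2*D := by linarith
    have hSbddAbove : ∀ a b : QuasiState X, BddAbove (S a b) :=
      fun a b => ⟨2*D, fun r hr => hSbdd a b r hr⟩
    have hS0 : ∀ a b : QuasiState X, (0:ℝ) ∈ S a b := by
      intro a b
      refine ⟨ContinuousMap.const X 0, ?_, ?_⟩
      · apply LipschitzWith.of_dist_le_mul
        intro x y; simp [dist_nonneg]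
      · rw [qs_const, qs_const]; simp
    have hWnonneg : ∀ a b : QuasiState X, 0 ≤ W1qs a b :=
      fun a b => by rw [hWS]; exact le_csSup (hSbddAbove a b) (hS0 a b)
    have hWge : ∀ (a b : QuasiState X) (f : C(X,ℝ)), LipschitzWith 1 ⇑f →
        |a.toFun f - b.toFun f| ≤ W1qs a b :=
      fun a b f hf => by rw [hWS]; exact le_csSup (hSbddAbove a b) (hSmem a b f hf)
    constructor
    · -- W1 → 0 implies weak convergence
      intro h f
      rw [Metric.tendsto_atTop]
      intro ε hε
      obtain ⟨K, g, hg, hfg⟩ := lipschitz_approx f (show (0:ℝ) < ε/4 by linarith)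
      set c : ℝ≥0 := max K 1 with hcdef
      have hc1 : (1:ℝ) ≤ (c:ℝ) := by
        have : (1:ℝ≥0) ≤ c := le_max_right _ _
        exact_mod_cast this
      have hc0 : (0:ℝ) < (c:ℝ) := lt_of_lt_of_le one_pos hc1
      have hgc : LipschitzWith c ⇑g := hg.weaken (le_max_left _ _)
      set h' : C(X,ℝ) := ((c:ℝ)⁻¹) • g with hh'def
      have hlip1 : LipschitzWith 1 ⇑h' := by
        apply LipschitzWith.of_dist_le_mul
        intro x y
        have hgd := hgc.dist_le_mul x y
        rw [hh'def]
        simp only [ContinuousMap.smul_apply, smul_eq_mul, Real.dist_eq, ← mul_sub, abs_mul,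
          abs_of_nonneg (inv_nonneg.2 hc0.le)]
        rw [NNReal.coe_one, one_mul]
        rw [Real.dist_eq] at hgd
        calc ((c:ℝ))⁻¹ * |g x - g y| ≤ ((c:ℝ))⁻¹ * ((c:ℝ) * dist x y) := by
              apply mul_le_mul_of_nonneg_left _ (inv_nonneg.2 hc0.le)
              rw [← Real.dist_eq]; exact hgd
          _ = dist x y := by field_simp
      have hgch : g = (c:ℝ) • h' := by
        rw [hh'def, smul_smul, mul_inv_cancel₀ hc0.ne', one_smul]
      have hgdiff : ∀ a b : QuasiState X,
          |a.toFun g - b.toFun g| = (c:ℝ) * |a.toFun h' - b.toFun h'| := by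
        intro a b
        have ha : a.toFun g = (c:ℝ) * a.toFun h' := by rw [hgch]; exact qs_smul a _ _
        have hb : b.toFun g = (c:ℝ) * b.toFun h' := by rw [hgch]; exact qs_smul b _ _
        rw [ha, hb, ← mul_sub, abs_mul, abs_of_nonneg hc0.le]
      obtain ⟨N, hN⟩ := Metric.tendsto_atTop.1 h (ε/(2*(c:ℝ))) (by positivity)
      refine ⟨N, fun n hn => ?_⟩
      have hWn := hN n hn
      rw [Real.dist_eq, sub_zero, abs_of_nonneg (hWnonneg _ _)] at hWn
      have h1 : |(ζ n).toFun f - (ζ n).toFun g| ≤ ε/4 := le_trans (qs_dist _ f g) hfg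
      have h2 : |ζ₀.toFun g - ζ₀.toFun f| ≤ ε/4 := by
        rw [abs_sub_comm]; exact le_trans (qs_dist _ f g) hfg
      have h3 : |(ζ n).toFun g - ζ₀.toFun g| < ε/2 := by
        rw [hgdiff]
        have := hWge (ζ n) ζ₀ h' hlip1
        calc (c:ℝ) * |(ζ n).toFun h' - ζ₀.toFun h'| ≤ (c:ℝ) * W1qs (ζ n) ζ₀ :=
              mul_le_mul_of_nonneg_left this hc0.le
          _ < (c:ℝ) * (ε/(2*(c:ℝ))) := by
              exact mul_lt_mul_of_pos_left hWn hc0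
          _ = ε/2 := by field_simp
      rw [Real.dist_eq]
      have t1 := abs_sub_le ((ζ n).toFun f) ((ζ n).toFun g) (ζ₀.toFun f)
      have t2 := abs_sub_le ((ζ n).toFun g) (ζ₀.toFun g) (ζ₀.toFun f)
      linarith
    · -- weak convergence implies W1 → 0
      intro h
      rw [Metric.tendsto_atTop]
      intro ε hε
      obtain ⟨t, -, htfin, htcov⟩ := finite_cover_balls_of_compact (isCompact_univ (X := X))
        (show (0:ℝ) < ε/16 by linarith)
      haveI := htfin.fintype
      set Φ : C(X,ℝ) → (↥t → ℝ) := fun f i => f i with hΦdef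
      have hAsub : Φ '' Kset ⊆ Set.univ.pi (fun _ => Set.Icc (-D) D) := by
        rintro _ ⟨g, hgK, rfl⟩ i _
        exact abs_le.1 (hKbd g hgK i)
      have htb : TotallyBounded (Φ '' Kset) :=
        TotallyBounded.subset hAsub
          ((isCompact_univ_pi (fun _ => isCompact_Icc)).totallyBounded)
      have hU : {p : (↥t → ℝ) × (↥t → ℝ) | dist p.1 p.2 < ε/16} ∈ uniformity (↥t → ℝ) :=
        Metric.dist_mem_uniformity (by linarith)
      obtain ⟨u, husub, hufin, hucov⟩ := totallyBounded_iff_subset.1 htb _ hU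
      have hex : ∀ v, v ∈ u → ∃ g, g ∈ Kset ∧ Φ g = v := by
        intro v hv
        rcases husub hv with ⟨g, hgK, hgv⟩
        exact ⟨g, hgK, hgv⟩
      choose rep hrepK hrepΦ using hex
      set F : Set C(X,ℝ) := {g | ∃ v, ∃ hv : v ∈ u, rep v hv = g} with hFdef
      have hFfin : F.Finite := by
        haveI := hufin.to_subtype
        have : F = Set.range (fun v : ↥u => rep v v.2) := by
          ext g
          constructor
          · rintro ⟨v, hv, rfl⟩; exact ⟨⟨v, hv⟩, rfl⟩
          · rintro ⟨⟨v, hv⟩, rfl⟩; exact ⟨v, hv, rfl⟩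
        rw [this]
        exact Set.finite_range _
      have hev : ∀ᶠ n in atTop, ∀ g ∈ F, |(ζ n).toFun g - ζ₀.toFun g| ≤ ε/8 := by
        rw [hFfin.eventually_all]
        intro g _
        obtain ⟨N, hN⟩ := Metric.tendsto_atTop.1 (h g) (ε/8) (by linarith)
        rw [eventually_atTop]
        refine ⟨N, fun n hn => ?_⟩
        have := hN n hn
        rw [Real.dist_eq] at this
        linarith
      have hnet : ∀ f ∈ Kset, ∃ g ∈ F, dist f g ≤ ε/4 := by
        intro f hf
        have hΦf : Φ f ∈ Φ '' Kset := ⟨f, hf, rfl⟩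
        obtain ⟨v, hv, hvd⟩ := Set.mem_iUnion₂.1 (hucov hΦf)
        have hvd' : dist (Φ f) v < ε/16 := hvd
        refine ⟨rep v hv, ⟨v, hv, rfl⟩, ?_⟩
        rw [ContinuousMap.dist_le (by linarith)]
        intro x
        obtain ⟨i, hi, hxi⟩ := Set.mem_iUnion₂.1 (htcov (Set.mem_univ x))
        have hxi' : dist x i < ε/16 := mem_ball.1 hxi
        have hix : dist i x < ε/16 := by rw [dist_comm]; exact hxi'
        have d1 : dist (f x) (f i) ≤ ε/16 := by
          have := hf.1.dist_le_mul x i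
          rw [NNReal.coe_one, one_mul] at this
          linarith
        have d3 : dist ((rep v hv) i) ((rep v hv) x) ≤ ε/16 := by
          have := (hrepK v hv).1.dist_le_mul i x
          rw [NNReal.coe_one, one_mul] at this
          linarith
        have d2 : dist (f i) ((rep v hv) i) ≤ ε/16 := by
          have hle := dist_le_pi_dist (Φ f) v ⟨i, hi⟩
          have hvi : v ⟨i, hi⟩ = (rep v hv) i := (congrFun (hrepΦ v hv) ⟨i, hi⟩).symm
          rw [hvi] at hle
          exact le_trans hle (le_of_lt hvd')
        calc dist (f x) ((rep v hv) x)
            ≤ dist (f x) (f i) + dist (f i) ((rep v hv) i) + dist ((rep v hv) i) ((rep v hv) x) :=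
              dist_triangle4 _ _ _ _
          _ ≤ ε/4 := by linarith
      obtain ⟨N, hN⟩ := eventually_atTop.1 hev
      refine ⟨N, fun n hn => ?_⟩
      rw [Real.dist_eq, sub_zero, abs_of_nonneg (hWnonneg _ _), hWS]
      have hsup : sSup (S (ζ n) ζ₀) ≤ 3*ε/4 := by
        apply Real.sSup_le _ (by linarith)
        rintro r ⟨f, hfL, rfl⟩
        obtain ⟨g0, hg0K, heq⟩ := hcenter f hfL
        rw [heq]
        obtain ⟨g, hgF, hdfg⟩ := hnet g0 hg0K
        have e1 : |(ζ n).toFun g0 - (ζ n).toFun g| ≤ ε/4 := le_trans (qs_dist _ _ _) hdfg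
        have e2 : |ζ₀.toFun g - ζ₀.toFun g0| ≤ ε/4 := by
          rw [abs_sub_comm]; exact le_trans (qs_dist _ _ _) hdfg
        have e3 : |(ζ n).toFun g - ζ₀.toFun g| ≤ ε/8 := hN n hn g hgF
        have t1 := abs_sub_le ((ζ n).toFun g0) ((ζ n).toFun g) (ζ₀.toFun g0)
        have t2 := abs_sub_le ((ζ n).toFun g) (ζ₀.toFun g) (ζ₀.toFun g0)
        linarith
      linarith
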